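/- Let D ≥ 1, let K and L be constant skew-symmetric real D×D matrices, let S : ℝ^D → ℝ be continuously differentiable, and let z : ℝ × ℝ → ℝ^D be twice continuously differentiable, 1-periodic in its second argument (z(t, x+1) = z(t, x) for all t, x), and satisfy K ∂_t z + L ∂_x z = ∇S(z) at every point. Then the total momentum t ↦ ∫₀¹ ½ (∂_x z)(t,x)·(K z)(t,x) dx and the total energy t ↦ ∫₀¹ [½ z(t,x)·(L ∂_x z)(t,x) − S(z(t,x))] dx are constant functions of t. -/

import Mathlib

open Matrix intervalIntegral

/-- Gradient of `S : ℝ^D → ℝ`, componentwise via the Fréchet derivative. -/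
noncomputable def grad {D : ℕ} (S : (Fin D → ℝ) → ℝ) (p : Fin D → ℝ) : Fin D → ℝ :=
  fun i => fderiv ℝ S p (Pi.single i 1)

/-- Partial derivative in the first (time) variable. -/
noncomputable def pt {E : Type*} [NormedAddCommGroup E] [NormedSpace ℝ E]
    (z : ℝ × ℝ → E) (p : ℝ × ℝ) : E :=
  deriv (fun s => z (s, p.2)) p.1

/-- Partial derivative in the second (space) variable. -/
noncomputable def px {E : Type*} [NormedAddCommGroup E] [NormedSpace ℝ E]
    (z : ℝ × ℝ → E) (p : ℝ × ℝ) : E :=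
  deriv (fun y => z (p.1, y)) p.2

variable {E : Type*} [NormedAddCommGroup E] [NormedSpace ℝ E]

lemma hasDerivAt_fst (z : ℝ × ℝ → E) {p : ℝ × ℝ} (hz : DifferentiableAt ℝ z p) :
    HasDerivAt (fun s => z (s, p.2)) (fderiv ℝ z p (1, 0)) p.1 := by
  have h1 : HasDerivAt (fun s : ℝ => (s, p.2)) ((1 : ℝ), (0 : ℝ)) p.1 :=
    (hasDerivAt_id p.1).prodMk (hasDerivAt_const p.1 p.2)
  have h2 : HasFDerivAt z (fderiv ℝ z p) (p.1, p.2) := by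
    simpa using hz.hasFDerivAt
  exact h2.comp_hasDerivAt p.1 h1

lemma hasDerivAt_snd (z : ℝ × ℝ → E) {p : ℝ × ℝ} (hz : DifferentiableAt ℝ z p) :
    HasDerivAt (fun y => z (p.1, y)) (fderiv ℝ z p (0, 1)) p.2 := by
  have h1 : HasDerivAt (fun y : ℝ => (p.1, y)) ((0 : ℝ), (1 : ℝ)) p.2 :=
    (hasDerivAt_const p.2 p.1).prodMk (hasDerivAt_id p.2)
  have h2 : HasFDerivAt z (fderiv ℝ z p) (p.1, p.2) := by
    simpa using hz.hasFDerivAt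
  exact h2.comp_hasDerivAt p.2 h1

lemma pt_eq (z : ℝ × ℝ → E) {p : ℝ × ℝ} (hz : DifferentiableAt ℝ z p) :
    pt z p = fderiv ℝ z p (1, 0) := (hasDerivAt_fst z hz).deriv

lemma px_eq (z : ℝ × ℝ → E) {p : ℝ × ℝ} (hz : DifferentiableAt ℝ z p) :
    px z p = fderiv ℝ z p (0, 1) := (hasDerivAt_snd z hz).deriv

lemma contDiff_pt (z : ℝ × ℝ → E) (hz : ContDiff ℝ 2 z) : ContDiff ℝ 1 (pt z) := by
  have h : ContDiff ℝ 1 (fun p => fderiv ℝ z p (1, 0)) :=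
    (hz.fderiv_right (by norm_num)).clm_apply contDiff_const
  have e : pt z = fun p => fderiv ℝ z p (1, 0) :=
    funext fun p => pt_eq z ((hz.differentiable (by norm_num)) p)
  rw [e]; exact h

lemma contDiff_px (z : ℝ × ℝ → E) (hz : ContDiff ℝ 2 z) : ContDiff ℝ 1 (px z) := by
  have h : ContDiff ℝ 1 (fun p => fderiv ℝ z p (0, 1)) :=
    (hz.fderiv_right (by norm_num)).clm_apply contDiff_const
  have e : px z = fun p => fderiv ℝ z p (0, 1) :=
    funext fun p => px_eq z ((hz.differentiable (by norm_num)) p)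
  rw [e]; exact h

lemma clairaut (z : ℝ × ℝ → E) (hz : ContDiff ℝ 2 z) (p : ℝ × ℝ) :
    fderiv ℝ (px z) p (1, 0) = fderiv ℝ (pt z) p (0, 1) := by
  have hdiff : Differentiable ℝ z := hz.differentiable (by norm_num)
  have hf' : ∀ q, HasFDerivAt z (fderiv ℝ z q) q := fun q => (hdiff q).hasFDerivAt
  have hfd : DifferentiableAt ℝ (fderiv ℝ z) p :=
    ((hz.fderiv_right (by norm_num : (1:WithTop ℕ∞) + 1 ≤ 2)).differentiable one_ne_zero) p
  have hsymm := second_derivative_symmetric hf' hfd.hasFDerivAt ((1:ℝ),(0:ℝ)) ((0:ℝ),(1:ℝ))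
  have ept : pt z = fun q => fderiv ℝ z q (1, 0) :=
    funext fun q => pt_eq z (hdiff q)
  have epx : px z = fun q => fderiv ℝ z q (0, 1) :=
    funext fun q => px_eq z (hdiff q)
  rw [ept, epx]
  rw [fderiv_clm_apply hfd (differentiableAt_const _),
      fderiv_clm_apply hfd (differentiableAt_const _)]
  simp [hsymm]

variable {D : ℕ}

lemma HasDerivAt.dotProd {u v : ℝ → Fin D → ℝ} {u' v' : Fin D → ℝ} {s : ℝ}
    (hu : HasDerivAt u u' s) (hv : HasDerivAt v v' s) :
    HasDerivAt (fun r => u r ⬝ᵥ v r) (u' ⬝ᵥ v s + u s ⬝ᵥ v') s := by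
  have hc : ∀ i : Fin D, HasDerivAt (fun r => u r i * v r i)
      (u' i * v s i + u s i * v' i) s := fun i => by
    have hui : HasDerivAt (fun r => u r i) (u' i) s :=
      (ContinuousLinearMap.proj (R := ℝ) (φ := fun _ : Fin D => ℝ) i).hasFDerivAt.comp_hasDerivAt s hu
    have hvi : HasDerivAt (fun r => v r i) (v' i) s :=
      (ContinuousLinearMap.proj (R := ℝ) (φ := fun _ : Fin D => ℝ) i).hasFDerivAt.comp_hasDerivAt s hv
    exact hui.mul hvi
  have := HasDerivAt.fun_sum (fun i (_ : i ∈ Finset.univ) => hc i)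
  simpa [dotProduct, Finset.sum_add_distrib] using this

lemma HasDerivAt.matMulVec {K : Matrix (Fin D) (Fin D) ℝ} {v : ℝ → Fin D → ℝ}
    {v' : Fin D → ℝ} {s : ℝ} (hv : HasDerivAt v v' s) :
    HasDerivAt (fun r => K.mulVec (v r)) (K.mulVec v') s := by
  have hK : HasFDerivAt (fun w : Fin D → ℝ => K.mulVec w)
      (LinearMap.toContinuousLinearMap (Matrix.mulVecLin K)) (v s) := by
    have := (LinearMap.toContinuousLinearMap (Matrix.mulVecLin K)).hasFDerivAt (x := v s)
    convert this using 2
    rfl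
  exact hK.comp_hasDerivAt s hv

lemma grad_dot (S : (Fin D → ℝ) → ℝ) (q : Fin D → ℝ) (hS : DifferentiableAt ℝ S q)
    (w : Fin D → ℝ) : fderiv ℝ S q w = (fun i => fderiv ℝ S q (Pi.single i 1)) ⬝ᵥ w := by
  have hw : w = ∑ i : Fin D, w i • (Pi.single i 1 : Fin D → ℝ) := by
    funext j
    simp [Finset.sum_apply, Pi.single_apply, Finset.sum_ite_eq']
  calc fderiv ℝ S q w = fderiv ℝ S q (∑ i : Fin D, w i • (Pi.single i 1 : Fin D → ℝ)) := by rw [← hw]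
    _ = ∑ i : Fin D, w i * fderiv ℝ S q (Pi.single i 1) := by
        rw [map_sum]; simp [smul_eq_mul]
    _ = (fun i => fderiv ℝ S q (Pi.single i 1)) ⬝ᵥ w := by
        simp [dotProduct, mul_comm]

lemma skew_dot {K : Matrix (Fin D) (Fin D) ℝ} (hK : Kᵀ = -K) (u v : Fin D → ℝ) :
    u ⬝ᵥ K.mulVec v = -(v ⬝ᵥ K.mulVec u) := by
  rw [Matrix.dotProduct_mulVec, ← Matrix.mulVec_transpose, hK]
  simp [Matrix.neg_mulVec, dotProduct_comm]

lemma skew_dot_self {K : Matrix (Fin D) (Fin D) ℝ} (hK : Kᵀ = -K) (u : Fin D → ℝ) :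
    u ⬝ᵥ K.mulVec u = 0 := by
  have := skew_dot hK u u; linarith

open MeasureTheory in
lemma swap_int (h : ℝ × ℝ → ℝ) (hh : Continuous h) {t₁ t₂ : ℝ} (hle : t₁ ≤ t₂) :
    ∫ x in (0:ℝ)..1, (∫ t in t₁..t₂, h (t, x)) = ∫ t in t₁..t₂, ∫ x in (0:ℝ)..1, h (t, x) := by
  rw [intervalIntegral.integral_of_le (zero_le_one), intervalIntegral.integral_of_le hle]
  simp only [intervalIntegral.integral_of_le hle, intervalIntegral.integral_of_le (zero_le_one)]
  have hint : Integrable (Function.uncurry fun x t => h (t, x))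
      ((volume.restrict (Set.Ioc (0:ℝ) 1)).prod (volume.restrict (Set.Ioc t₁ t₂))) := by
    rw [Measure.prod_restrict]
    have hc : Continuous (Function.uncurry fun x t : ℝ => h (t, x)) :=
      hh.comp continuous_swap
    exact (hc.continuousOn.integrableOn_compact (isCompact_Icc.prod isCompact_Icc)).mono_set
      (Set.prod_mono Set.Ioc_subset_Icc_self Set.Ioc_subset_Icc_self)
  exact MeasureTheory.integral_integral_swap hint

lemma conserved (f g h : ℝ × ℝ → ℝ)
    (hf : Continuous f) (hh : Continuous h)
    (hdf : ∀ p : ℝ × ℝ, HasDerivAt (fun s => f (s, p.2)) (h p) p.1)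
    (hdg : ∀ p : ℝ × ℝ, HasDerivAt (fun y => g (p.1, y)) (h p) p.2)
    (hgper : ∀ t x : ℝ, g (t, x + 1) = g (t, x)) (t₁ t₂ : ℝ) :
    ∫ x in (0:ℝ)..1, f (t₁, x) = ∫ x in (0:ℝ)..1, f (t₂, x) := by
  -- wlog t₁ ≤ t₂
  wlog hle : t₁ ≤ t₂ with H
  · exact (H f g h hf hh hdf hdg hgper t₂ t₁ (le_of_not_ge hle)).symm
  have hkey : ∀ x : ℝ, f (t₂, x) - f (t₁, x) = ∫ t in t₁..t₂, h (t, x) := fun x => by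
    rw [intervalIntegral.integral_eq_sub_of_hasDerivAt
      (f := fun s => f (s, x)) (f' := fun t => h (t, x))
      (fun t _ => hdf (t, x))
      ((hh.comp (continuous_id.prodMk continuous_const)).intervalIntegrable _ _)]
  have hinner : ∀ t : ℝ, (∫ x in (0:ℝ)..1, h (t, x)) = 0 := fun t => by
    have := intervalIntegral.integral_eq_sub_of_hasDerivAt (a := (0:ℝ)) (b := 1)
      (f := fun y => g (t, y)) (f' := fun x => h (t, x))
      (fun x _ => hdg (t, x))
      ((hh.comp (continuous_const.prodMk continuous_id)).intervalIntegrable _ _)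
    rw [this]
    have := hgper t 0
    simp only [zero_add] at this
    rw [show (fun y => g (t, y)) 1 - (fun y => g (t, y)) 0 = g (t,1) - g (t,0) from rfl, this, sub_self]
  have hfi : ∀ t : ℝ, IntervalIntegrable (fun x => f (t, x)) MeasureTheory.volume 0 1 :=
    fun t => (hf.comp (continuous_const.prodMk continuous_id)).intervalIntegrable _ _
  have : (∫ x in (0:ℝ)..1, f (t₂, x)) - ∫ x in (0:ℝ)..1, f (t₁, x) = 0 := by
    rw [← intervalIntegral.integral_sub (hfi t₂) (hfi t₁)]
    calc (∫ x in (0:ℝ)..1, (f (t₂, x) - f (t₁, x)))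
        = ∫ x in (0:ℝ)..1, ∫ t in t₁..t₂, h (t, x) := by
          apply intervalIntegral.integral_congr; intro x _; exact hkey x
      _ = ∫ t in t₁..t₂, ∫ x in (0:ℝ)..1, h (t, x) := swap_int h hh hle
      _ = 0 := by simp [hinner]
  linarith


/-- For a spatially `1`-periodic solution of the multisymplectic PDE, the total
momentum `∫₀¹ ½ (∂_x z)·(K z) dx` and the total energy
`∫₀¹ (½ z·(L ∂_x z) − S(z)) dx` are constant in time. -/
theorem total_momentum_and_energy_constant
    (D : ℕ) (hD : 1 ≤ D)
    (K L : Matrix (Fin D) (Fin D) ℝ)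
    (hK : Kᵀ = -K) (hL : Lᵀ = -L)
    (S : (Fin D → ℝ) → ℝ) (hS : ContDiff ℝ 1 S)
    (z : ℝ × ℝ → Fin D → ℝ) (hz : ContDiff ℝ 2 z)
    (hper : ∀ t x : ℝ, z (t, x + 1) = z (t, x))
    (hpde : ∀ p : ℝ × ℝ, K.mulVec (pt z p) + L.mulVec (px z p) = grad S (z p)) :
    (∀ t₁ t₂ : ℝ,
      (∫ x in (0:ℝ)..1, (1 / 2 : ℝ) * (px z (t₁, x) ⬝ᵥ K.mulVec (z (t₁, x))))
        = ∫ x in (0:ℝ)..1, (1 / 2 : ℝ) * (px z (t₂, x) ⬝ᵥ K.mulVec (z (t₂, x)))) ∧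
    (∀ t₁ t₂ : ℝ,
      (∫ x in (0:ℝ)..1,
          ((1 / 2 : ℝ) * (z (t₁, x) ⬝ᵥ L.mulVec (px z (t₁, x))) - S (z (t₁, x))))
        = ∫ x in (0:ℝ)..1,
          ((1 / 2 : ℝ) * (z (t₂, x) ⬝ᵥ L.mulVec (px z (t₂, x))) - S (z (t₂, x)))) := by
  have hdiff : Differentiable ℝ z := hz.differentiable (by norm_num)
  have hSd : Differentiable ℝ S := hS.differentiable one_ne_zero
  have hpx1 : ContDiff ℝ 1 (px z) := contDiff_px z hz
  have hpt1 : ContDiff ℝ 1 (pt z) := contDiff_pt z hz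
  have hzc : Continuous z := hdiff.continuous
  have hpxc : Continuous (px z) := hpx1.continuous
  have hptc : Continuous (pt z) := hpt1.continuous
  have hAc : Continuous (fun p => fderiv ℝ (px z) p (1, 0)) :=
    (hpx1.continuous_fderiv one_ne_zero).clm_apply continuous_const
  have hSzc : Continuous (fun p => S (z p)) := (hS.continuous).comp hzc
  have hdSc : Continuous (fun p => fderiv ℝ S (z p) (pt z p)) :=
    ((hS.continuous_fderiv one_ne_zero).comp hzc).clm_apply hptc
  -- basic HasDerivAt facts
  have hzt : ∀ p : ℝ × ℝ, HasDerivAt (fun s => z (s, p.2)) (pt z p) p.1 :=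
    fun p => (pt_eq z (hdiff p)) ▸ hasDerivAt_fst z (hdiff p)
  have hzx : ∀ p : ℝ × ℝ, HasDerivAt (fun y => z (p.1, y)) (px z p) p.2 :=
    fun p => (px_eq z (hdiff p)) ▸ hasDerivAt_snd z (hdiff p)
  have hpxt : ∀ p : ℝ × ℝ, HasDerivAt (fun s => px z (s, p.2))
      (fderiv ℝ (px z) p (1, 0)) p.1 :=
    fun p => hasDerivAt_fst (px z) ((hpx1.differentiable one_ne_zero) p)
  have hptx : ∀ p : ℝ × ℝ, HasDerivAt (fun y => pt z (p.1, y))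
      (fderiv ℝ (px z) p (1, 0)) p.2 :=
    fun p => (clairaut z hz p) ▸ hasDerivAt_snd (pt z) ((hpt1.differentiable one_ne_zero) p)
  have hSt : ∀ p : ℝ × ℝ, HasDerivAt (fun s => S (z (s, p.2)))
      (fderiv ℝ S (z p) (pt z p)) p.1 :=
    fun p => ((hSd (z p)).hasFDerivAt).comp_hasDerivAt p.1 (hzt p)
  have hSx : ∀ p : ℝ × ℝ, HasDerivAt (fun y => S (z (p.1, y)))
      (fderiv ℝ S (z p) (px z p)) p.2 :=
    fun p => ((hSd (z p)).hasFDerivAt).comp_hasDerivAt p.2 (hzx p)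
  have hgradd : ∀ (p : ℝ × ℝ) (w : Fin D → ℝ),
      fderiv ℝ S (z p) w = (K.mulVec (pt z p) + L.mulVec (px z p)) ⬝ᵥ w := by
    intro p w
    rw [grad_dot S (z p) (hSd (z p)) w]
    rw [show (fun i => fderiv ℝ S (z p) (Pi.single i 1)) = grad S (z p) from rfl, ← hpde p]
  -- periodicity of derivatives
  have hptper : ∀ t x : ℝ, pt z (t, x + 1) = pt z (t, x) := by
    intro t x
    show deriv (fun s => z (s, x + 1)) t = deriv (fun s => z (s, x)) t
    congr 1
    funext s; exact hper s x
  constructor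
  · -- momentum
    intro t₁ t₂
    exact conserved
      (fun p => (1 / 2 : ℝ) * (px z p ⬝ᵥ K.mulVec (z p)))
      (fun p => (1 / 2 : ℝ) * (pt z p ⬝ᵥ K.mulVec (z p)) + S (z p))
      (fun p => (1 / 2 : ℝ) * (fderiv ℝ (px z) p (1, 0) ⬝ᵥ K.mulVec (z p))
        + (1 / 2 : ℝ) * (px z p ⬝ᵥ K.mulVec (pt z p)))
      (continuous_const.mul (hpxc.dotProduct (continuous_const.matrix_mulVec hzc)))
      ((continuous_const.mul (hAc.dotProduct (continuous_const.matrix_mulVec hzc))).add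
        (continuous_const.mul (hpxc.dotProduct (continuous_const.matrix_mulVec hptc))))
      (fun p => by
        have h1 : HasDerivAt (fun s => (1 / 2 : ℝ) * (px z (s, p.2) ⬝ᵥ K.mulVec (z (s, p.2))))
            ((1 / 2 : ℝ) * (fderiv ℝ (px z) p (1, 0) ⬝ᵥ K.mulVec (z (p.1, p.2))
              + px z (p.1, p.2) ⬝ᵥ K.mulVec (pt z p))) p.1 :=
          ((hpxt p).dotProd ((hzt p).matMulVec (K := K))).const_mul _
        simp only [Prod.mk.eta] at h1
        convert h1 using 1
        ring)
      (fun p => by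
        have h1 : HasDerivAt (fun y => (1 / 2 : ℝ) * (pt z (p.1, y) ⬝ᵥ K.mulVec (z (p.1, y)))
              + S (z (p.1, y)))
            ((1 / 2 : ℝ) * (fderiv ℝ (px z) p (1, 0) ⬝ᵥ K.mulVec (z (p.1, p.2))
              + pt z (p.1, p.2) ⬝ᵥ K.mulVec (px z p)) + fderiv ℝ S (z p) (px z p)) p.2 :=
          ((((hptx p).dotProd ((hzx p).matMulVec (K := K))).const_mul _).add (hSx p))
        simp only [Prod.mk.eta] at h1
        convert h1 using 1
        have e1 : fderiv ℝ S (z p) (px z p) = px z p ⬝ᵥ K.mulVec (pt z p) := by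
          rw [hgradd p (px z p), add_dotProduct, dotProduct_comm,
            dotProduct_comm (L.mulVec (px z p)), skew_dot_self hL (px z p)]
          ring
        have e2 : pt z p ⬝ᵥ K.mulVec (px z p) = -(px z p ⬝ᵥ K.mulVec (pt z p)) :=
          skew_dot hK _ _
        simp only [e1, e2]; ring)
      (fun t x => by simp only [hptper, hper])
      t₁ t₂
  · -- energy
    intro t₁ t₂
    exact conserved
      (fun p => (1 / 2 : ℝ) * (z p ⬝ᵥ L.mulVec (px z p)) - S (z p))
      (fun p => (1 / 2 : ℝ) * (z p ⬝ᵥ L.mulVec (pt z p)))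
      (fun p => (1 / 2 : ℝ) * (pt z p ⬝ᵥ L.mulVec (px z p))
        + (1 / 2 : ℝ) * (z p ⬝ᵥ L.mulVec (fderiv ℝ (px z) p (1, 0)))
        - fderiv ℝ S (z p) (pt z p))
      ((continuous_const.mul (hzc.dotProduct (continuous_const.matrix_mulVec hpxc))).sub hSzc)
      (((continuous_const.mul (hptc.dotProduct (continuous_const.matrix_mulVec hpxc))).add
        (continuous_const.mul (hzc.dotProduct (continuous_const.matrix_mulVec hAc)))).sub hdSc)
      (fun p => by
        have h1 : HasDerivAt (fun s => (1 / 2 : ℝ) * (z (s, p.2) ⬝ᵥ L.mulVec (px z (s, p.2)))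
              - S (z (s, p.2)))
            ((1 / 2 : ℝ) * (pt z p ⬝ᵥ L.mulVec (px z (p.1, p.2))
              + z (p.1, p.2) ⬝ᵥ L.mulVec (fderiv ℝ (px z) p (1, 0)))
              - fderiv ℝ S (z p) (pt z p)) p.1 :=
          ((((hzt p).dotProd ((hpxt p).matMulVec (K := L))).const_mul _).sub (hSt p))
        simp only [Prod.mk.eta] at h1
        convert h1 using 1
        ring)
      (fun p => by
        have h1 : HasDerivAt (fun y => (1 / 2 : ℝ) * (z (p.1, y) ⬝ᵥ L.mulVec (pt z (p.1, y))))
            ((1 / 2 : ℝ) * (px z p ⬝ᵥ L.mulVec (pt z (p.1, p.2))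
              + z (p.1, p.2) ⬝ᵥ L.mulVec (fderiv ℝ (px z) p (1, 0)))) p.2 :=
          (((hzx p).dotProd ((hptx p).matMulVec (K := L))).const_mul _)
        simp only [Prod.mk.eta] at h1
        convert h1 using 1
        have e1 : fderiv ℝ S (z p) (pt z p) = pt z p ⬝ᵥ L.mulVec (px z p) := by
          rw [hgradd p (pt z p), add_dotProduct, dotProduct_comm,
            dotProduct_comm (L.mulVec (px z p)), skew_dot_self hK (pt z p)]
          ring
        have e2 : px z p ⬝ᵥ L.mulVec (pt z p) = -(pt z p ⬝ᵥ L.mulVec (px z p)) :=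
          skew_dot hL _ _
        simp only [e1, e2]; ring)
      (fun t x => by simp only [hptper, hper])
      t₁ t₂
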